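/- Truncation error of the Gaussian LCU integral: for any Hermitian operator H, real τ > 0, ω ∈ ℝ, and x_c ≥ 2√(ln(2/ε)), the operator distance between g_τ(H−ω) = c ∫_{−∞}^{∞} p(x) e^{ixτω} e^{−iτxH} dx and its truncation g_{τ,x_c}(H−ω) = c ∫_{−x_c}^{x_c} p(x) e^{ixτω} e^{−iτxH} dx is at most ε, where p(x) = (1/√(2π)) e^{−x²/4} and c is the normalization constant making the untruncated expression equal e^{−τ²(H−ω)²}. -/

import Mathlib

open MeasureTheory

section AuxLemmas

open Set

private lemma stmt6_aux_norm_exp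
    {E : Type*} [NormedAddCommGroup E] [InnerProductSpace ℂ E] [FiniteDimensional ℂ E]
    (H : E →L[ℂ] E) (hH : IsSelfAdjoint H) (r s : ℝ) :
    ‖NormedSpace.exp ((-(Complex.I * r * s)) • H)‖ ≤ 1 := by
  rcases subsingleton_or_nontrivial E with h | h
  · haveI : Subsingleton (E →L[ℂ] E) :=
      ⟨fun a b => ContinuousLinearMap.ext fun x => Subsingleton.elim _ _⟩
    rw [Subsingleton.elim (NormedSpace.exp ((-(Complex.I * r * s)) • H)) 0, norm_zero]
    norm_num
  · have ha : IsSelfAdjoint ((-(r*s) : ℝ) • H) := IsSelfAdjoint.smul (star_trivial _) hH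
    have key : (-(Complex.I * r * s)) • H = Complex.I • (((-(r*s) : ℝ) • H)) := by
      rw [smul_comm, ← smul_assoc]
      congr 1
      rw [Complex.real_smul]
      push_cast
      ring
    rw [key]
    have := CStarRing.norm_coe_unitary
      (selfAdjoint.expUnitary ⟨(-(r*s) : ℝ) • H, selfAdjoint.mem_iff.mpr ha.star_eq⟩)
    rw [selfAdjoint.expUnitary_coe] at this
    exact le_of_eq this

private lemma stmt6_aux_tail (xc ε : ℝ) (hε : 0 < ε) (hε1 : ε < 1)
    (hxc : 2 * Real.sqrt (Real.log (2 / ε)) ≤ xc) :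
    ∫ x in Ioi xc, (2 * Real.sqrt Real.pi)⁻¹ * Real.exp (-(x^2)/4) ≤ ε / 2 := by
  have hlog : (0:ℝ) < Real.log (2/ε) := Real.log_pos (by rw [lt_div_iff₀ hε]; linarith)
  have hxc0 : 0 < xc := lt_of_lt_of_le (by positivity) hxc
  have hsp : (0:ℝ) < (2 * Real.sqrt Real.pi)⁻¹ := by positivity
  have hint2 : IntegrableOn (fun x => Real.exp (-(xc/4) * x)) (Ioi xc) :=
    exp_neg_integrableOn_Ioi xc (by positivity)
  have hval : ∫ x in Ioi xc, Real.exp (-(xc/4) * x) = (4/xc) * Real.exp (-(xc^2)/4) := by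
    have h := integral_comp_mul_left_Ioi (fun y => Real.exp (-y)) xc (b := xc/4) (by positivity)
    simp only [← neg_mul] at h
    rw [h, integral_exp_neg_Ioi, smul_eq_mul]
    rw [show xc/4*xc = xc^2/4 by ring, show -(xc^2)/4 = -(xc^2/4) by ring]
    field_simp
  have hmono : ∫ x in Ioi xc, (2 * Real.sqrt Real.pi)⁻¹ * Real.exp (-(x^2)/4)
      ≤ ∫ x in Ioi xc, (2 * Real.sqrt Real.pi)⁻¹ * Real.exp (-(xc/4) * x) := by
    apply setIntegral_mono_on
    · exact (((integrable_exp_neg_mul_sq (by norm_num : (0:ℝ) < 1/4)).const_mul _).congr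
        (by filter_upwards with x; rw [show -(1/4) * x^2 = -(x^2)/4 by ring])).integrableOn
    · exact hint2.const_mul _
    · exact measurableSet_Ioi
    · intro x hx
      have hx' : xc ≤ x := le_of_lt hx
      gcongr
      nlinarith
  rw [integral_const_mul, integral_const_mul, hval] at hmono
  rw [integral_const_mul]
  refine le_trans (by exact_mod_cast hmono) ?_
  have hexp : Real.exp (-(xc^2)/4) ≤ ε / 2 := by
    have h1 : Real.log (2/ε) ≤ xc^2/4 := by
      nlinarith [Real.sq_sqrt hlog.le, Real.sqrt_nonneg (Real.log (2/ε))]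
    have hlg : Real.log (ε/2) = - Real.log (2/ε) := by
      rw [← Real.log_inv]; congr 1; rw [inv_div]
    have h2 : -(xc^2)/4 ≤ Real.log (ε/2) := by rw [hlg]; linarith
    exact (Real.le_log_iff_exp_le (by positivity)).mp h2
  have hsq : (1:ℝ) ≤ Real.sqrt Real.pi * xc / 2 := by
    have hpi : Real.sqrt (Real.log 2) ≤ Real.sqrt (Real.log (2/ε)) := by
      apply Real.sqrt_le_sqrt
      apply Real.log_le_log (by norm_num)
      rw [le_div_iff₀ hε]; linarith
    have h2 : 2 * Real.sqrt (Real.log 2) ≤ xc := by linarith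
    have hl2 : (0.6931471803:ℝ) < Real.log 2 := Real.log_two_gt_d9
    have hpi3 : (3.141592:ℝ) < Real.pi := by
      have := Real.pi_gt_d6; linarith
    have hs1 : (0.8:ℝ) ≤ Real.sqrt (Real.log 2) := by
      rw [show (0.8:ℝ) = Real.sqrt 0.64 by
        rw [show (0.64:ℝ) = 0.8^2 by norm_num, Real.sqrt_sq]; norm_num]
      exact Real.sqrt_le_sqrt (by linarith)
    have hs2 : (1.7:ℝ) ≤ Real.sqrt Real.pi := by
      rw [show (1.7:ℝ) = Real.sqrt 2.89 by
        rw [show (2.89:ℝ) = 1.7^2 by norm_num, Real.sqrt_sq]; norm_num]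
      exact Real.sqrt_le_sqrt (by linarith)
    nlinarith [Real.sqrt_nonneg Real.pi]
  have key : (2 * Real.sqrt Real.pi)⁻¹ * (4/xc) ≤ 1 := by
    rw [inv_mul_le_iff₀ (by positivity), mul_one, div_le_iff₀ hxc0]
    nlinarith [Real.sqrt_nonneg Real.pi]
  calc (2 * Real.sqrt Real.pi)⁻¹ * (4/xc * Real.exp (-(xc^2)/4))
      = ((2 * Real.sqrt Real.pi)⁻¹ * (4/xc)) * Real.exp (-(xc^2)/4) := by ring
    _ ≤ 1 * (ε/2) := mul_le_mul key hexp (Real.exp_pos _).le (by norm_num)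
    _ = ε/2 := by ring

end AuxLemmas

/-- Truncation error of the Gaussian LCU integral: cutting the real-time integral at
`x_c ≥ 2 √(ln (2/ε))` changes the filter by at most `ε` in operator norm.  Here
`p x = (2√π)⁻¹ e^{-x²/4}` is the (normalised) Gaussian density and `c = 1`. -/
theorem stmt_6
    {E : Type*} [NormedAddCommGroup E] [InnerProductSpace ℂ E] [FiniteDimensional ℂ E]
    (H : E →L[ℂ] E) (hH : IsSelfAdjoint H) (τ ω xc ε : ℝ)
    (hτ : 0 < τ) (hε : 0 < ε)
    (hxc : 2 * Real.sqrt (Real.log (2 / ε)) ≤ xc) :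
    ‖(∫ x : ℝ, ((2 * Real.sqrt Real.pi)⁻¹ * Real.exp (-(x ^ 2) / 4)) •
          (Complex.exp (Complex.I * x * τ * ω) •
            NormedSpace.exp ((-(Complex.I * τ * x)) • H)))
      - (∫ x in Set.Icc (-xc) xc, ((2 * Real.sqrt Real.pi)⁻¹ * Real.exp (-(x ^ 2) / 4)) •
          (Complex.exp (Complex.I * x * τ * ω) •
            NormedSpace.exp ((-(Complex.I * τ * x)) • H)))‖ ≤ ε := by
  set g : ℝ → ℝ := fun x => (2 * Real.sqrt Real.pi)⁻¹ * Real.exp (-(x ^ 2) / 4) with hg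
  set f : ℝ → (E →L[ℂ] E) := fun x =>
    ((2 * Real.sqrt Real.pi)⁻¹ * Real.exp (-(x ^ 2) / 4)) •
      (Complex.exp (Complex.I * x * τ * ω) •
        NormedSpace.exp ((-(Complex.I * τ * x)) • H)) with hf
  -- pointwise norm bound
  have hgf : ∀ x : ℝ, ‖f x‖ ≤ g x := by
    intro x
    rw [hf, hg]
    simp only
    rw [norm_smul ((2 * Real.sqrt Real.pi)⁻¹ * Real.exp (-(x ^ 2) / 4))
        (Complex.exp (Complex.I * x * τ * ω) • NormedSpace.exp ((-(Complex.I * τ * x)) • H)),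
      norm_smul (Complex.exp (Complex.I * x * τ * ω))
        (NormedSpace.exp ((-(Complex.I * τ * x)) • H))]
    have h1 : ‖Complex.exp (Complex.I * x * τ * ω)‖ = 1 := by
      rw [Complex.norm_exp]
      simp
    have h2 := stmt6_aux_norm_exp H hH τ x
    have hc : (0:ℝ) ≤ (2 * Real.sqrt Real.pi)⁻¹ * Real.exp (-(x ^ 2) / 4) := by positivity
    rw [h1, one_mul, Real.norm_eq_abs, abs_of_nonneg hc]
    nlinarith
  have hg_nonneg : ∀ x : ℝ, 0 ≤ g x := fun x => by rw [hg]; positivity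
  -- integrability of g
  have hg_int : Integrable g := by
    have h := (integrable_exp_neg_mul_sq (by norm_num : (0:ℝ) < 1/4)).const_mul
      ((2 * Real.sqrt Real.pi)⁻¹)
    refine h.congr (Filter.Eventually.of_forall fun x => ?_)
    rw [hg]; ring_nf
  -- integrability of f
  have hcont : Continuous f := by
    rw [hf]
    apply Continuous.fun_smul
    · fun_prop
    apply Continuous.fun_smul
    · fun_prop
    let +nondep : NormedAlgebra ℚ (E →L[ℂ] E) := .restrictScalars ℚ ℂ (E →L[ℂ] E)
    exact NormedSpace.exp_continuous.comp (by fun_prop)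
  have hf_int : Integrable f :=
    hg_int.mono' hcont.aestronglyMeasurable (Filter.Eventually.of_forall hgf)
  -- reduce to the complement integral
  have hsplit := integral_add_compl (measurableSet_Icc (a := -xc) (b := xc)) hf_int
  have hxc0 : 0 ≤ xc := le_trans (by positivity) hxc
  have hstep1 : ‖(∫ x : ℝ, f x) - ∫ x in Set.Icc (-xc) xc, f x‖
      = ‖∫ x in (Set.Icc (-xc) xc)ᶜ, f x‖ := by
    rw [← hsplit, add_sub_cancel_left]
  rw [show (∫ x : ℝ, ((2 * Real.sqrt Real.pi)⁻¹ * Real.exp (-(x ^ 2) / 4)) •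
          (Complex.exp (Complex.I * x * τ * ω) •
            NormedSpace.exp ((-(Complex.I * τ * x)) • H))) = ∫ x : ℝ, f x from rfl,
    show (∫ x in Set.Icc (-xc) xc, ((2 * Real.sqrt Real.pi)⁻¹ * Real.exp (-(x ^ 2) / 4)) •
          (Complex.exp (Complex.I * x * τ * ω) •
            NormedSpace.exp ((-(Complex.I * τ * x)) • H)))
      = ∫ x in Set.Icc (-xc) xc, f x from rfl, hstep1]
  have hstep2 : ‖∫ x in (Set.Icc (-xc) xc)ᶜ, f x‖ ≤ ∫ x in (Set.Icc (-xc) xc)ᶜ, g x :=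
    norm_integral_le_of_norm_le hg_int.integrableOn (Filter.Eventually.of_forall hgf)
  refine hstep2.trans ?_
  -- case split on ε
  rcases le_or_gt 1 ε with hε1 | hε1
  · -- the whole integral of g equals 1 ≤ ε
    have htot : ∫ x : ℝ, g x = 1 := by
      have h4 : ∫ x : ℝ, Real.exp (-(1/4 : ℝ) * x ^ 2) = Real.sqrt (Real.pi / (1/4)) :=
        integral_gaussian (1/4)
      have heq : ∫ x : ℝ, g x = (2 * Real.sqrt Real.pi)⁻¹ * Real.sqrt (Real.pi / (1/4)) := by
        rw [← h4, ← integral_const_mul]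
        congr 1 with x
        rw [hg]; ring_nf
      rw [heq, show Real.pi / (1/4) = 4 * Real.pi by ring, show (4:ℝ) = 2^2 by norm_num,
        Real.sqrt_mul (by positivity), Real.sqrt_sq (by norm_num)]
      have : Real.sqrt Real.pi ≠ 0 := by positivity
      field_simp
    calc ∫ x in (Set.Icc (-xc) xc)ᶜ, g x ≤ ∫ x : ℝ, g x :=
          setIntegral_le_integral hg_int (Filter.Eventually.of_forall hg_nonneg)
      _ = 1 := htot
      _ ≤ ε := hε1
  · -- tail estimate
    have hcompl : (Set.Icc (-xc) xc)ᶜ = Set.Iio (-xc) ∪ Set.Ioi xc := by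
      ext x
      simp only [Set.mem_compl_iff, Set.mem_Icc, not_and_or, not_le, Set.mem_union,
        Set.mem_Iio, Set.mem_Ioi]
    have hdisj : Disjoint (Set.Iio (-xc)) (Set.Ioi xc) := by
      apply Set.disjoint_left.mpr
      intro a ha ha'
      simp only [Set.mem_Iio] at ha
      simp only [Set.mem_Ioi] at ha'
      linarith
    have hunion : ∫ x in (Set.Icc (-xc) xc)ᶜ, g x
        = (∫ x in Set.Iio (-xc), g x) + ∫ x in Set.Ioi xc, g x := by
      rw [hcompl]
      exact setIntegral_union hdisj measurableSet_Ioi hg_int.integrableOn hg_int.integrableOn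
    have heven : ∀ x : ℝ, g (-x) = g x := fun x => by rw [hg]; ring_nf
    have hsym : ∫ x in Set.Iio (-xc), g x = ∫ x in Set.Ioi xc, g x := by
      calc ∫ x in Set.Iio (-xc), g x = ∫ x in Set.Iic (-xc), g x :=
            (integral_Iic_eq_integral_Iio).symm
        _ = ∫ x in Set.Iic (-xc), g (-x) :=
            (setIntegral_congr_fun measurableSet_Iic fun x _ => (heven x).symm)
        _ = ∫ x in Set.Ioi xc, g x := by
            rw [integral_comp_neg_Iic (-xc) g, neg_neg]
    have htail : ∫ x in Set.Ioi xc, g x ≤ ε / 2 := by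
      have := stmt6_aux_tail xc ε hε hε1 hxc
      refine le_trans (le_of_eq ?_) this
      rfl
    rw [hunion, hsym]
    linarith
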